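/- Let V_0, f : ℤ → ℝ with Δf(n) + f(n)f(n+1) = V_0(n) for all n ∈ ℤ, and let u : ℤ → ℝ be a nowhere-vanishing sequence satisfying Δu(n) = f(n)u(n) + f(n+1)u(n+1) + 1 for all n ∈ ℤ. Then the sequence g(n) = f(n) + 1/u(n) also satisfies the discrete Riccati equation: Δg(n) + g(n)g(n+1) = V_0(n) for all n ∈ ℤ. -/

import Mathlib

/-- If f solves the discrete Riccati equation
Δf(n) + f(n)f(n+1) = V₀(n) and u is nowhere vanishing with
Δu(n) = f(n)u(n) + f(n+1)u(n+1) + 1, then g(n) = f(n) + 1/u(n) also solves the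
discrete Riccati equation. -/
theorem stmt_15 (V0 f : ℤ → ℝ)
    (hf : ∀ n : ℤ, (f (n+1) - f n) + f n * f (n+1) = V0 n)
    (u : ℤ → ℝ)
    (hune : ∀ n : ℤ, u n ≠ 0)
    (hu : ∀ n : ℤ, u (n+1) - u n = f n * u n + f (n+1) * u (n+1) + 1)
    (g : ℤ → ℝ)
    (hg : ∀ n : ℤ, g n = f n + 1 / u n) :
    ∀ n : ℤ, (g (n+1) - g n) + g n * g (n+1) = V0 n := by
  intro n
  rw [hg n, hg (n+1), ← hf n]
  have h1 := hune n
  have h2 := hune (n+1)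
  have h3 := hu n
  field_simp
  linear_combination (-1) * h3
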